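/- The vector k* = (1/2, 1/3, 2/3) ∈ ℝ³ is an exceptional point of order exactly four for the lattice ℤ³: the nonzero m ∈ ℤ³ with |k*| = |k* − m| are precisely m₂ = (1,0,0), m₃ = (0,1,1) and m₄ = (1,1,1). -/

import Mathlib

/-- Embedding of an integer vector into `EuclideanSpace ℝ (Fin 3)`. -/
def intVec (m : Fin 3 → ℤ) : EuclideanSpace ℝ (Fin 3) := WithLp.toLp 2 (fun i => (m i : ℝ))

theorem exceptional_order_four (kstar : EuclideanSpace ℝ (Fin 3))
    (hk : kstar = WithLp.toLp 2 (![1/2, 1/3, 2/3] : Fin 3 → ℝ)) :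
    ∀ m : Fin 3 → ℤ, m ≠ 0 →
      (‖kstar‖ = ‖kstar - intVec m‖
        ↔ m = ![1, 0, 0] ∨ m = ![0, 1, 1] ∨ m = ![1, 1, 1]) := by
  intro m hm
  obtain ⟨a, b, c, rfl⟩ : ∃ a b c, m = ![a, b, c] :=
    ⟨m 0, m 1, m 2, by funext i; fin_cases i <;> rfl⟩
  have key : ‖kstar‖ = ‖kstar - intVec ![a, b, c]‖ ↔
      (3*a^2 - 3*a + 3*b^2 - 2*b + 3*c^2 - 4*c = 0) := by
    have h1 : ‖kstar‖ = ‖kstar - intVec ![a, b, c]‖ ↔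
        ‖kstar‖^2 = ‖kstar - intVec ![a, b, c]‖^2 :=
      (sq_eq_sq₀ (norm_nonneg _) (norm_nonneg _)).symm
    rw [h1, EuclideanSpace.norm_eq, EuclideanSpace.norm_eq,
      Real.sq_sqrt (by positivity), Real.sq_sqrt (by positivity)]
    rw [hk]
    simp only [Fin.sum_univ_three, PiLp.sub_apply, intVec, PiLp.toLp_apply, Matrix.cons_val_zero,
      Matrix.cons_val_one, Matrix.head_cons, Matrix.cons_val_two, Matrix.tail_cons,
      Real.norm_eq_abs, sq_abs]
    constructor
    · intro h
      have : ((3*a^2 - 3*a + 3*b^2 - 2*b + 3*c^2 - 4*c : ℤ) : ℝ) = 0 := by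
        push_cast; nlinarith [h]
      exact_mod_cast this
    · intro h
      have : ((3*a^2 - 3*a + 3*b^2 - 2*b + 3*c^2 - 4*c : ℤ) : ℝ) = 0 := by
        exact_mod_cast h
      push_cast at this; nlinarith [this]
  rw [key]
  have hm0 : ¬ (a = 0 ∧ b = 0 ∧ c = 0) := by
    rintro ⟨rfl, rfl, rfl⟩
    exact hm (by funext i; fin_cases i <;> rfl)
  have heq : ∀ x y z : ℤ, (![a, b, c] = ![x, y, z]) ↔ (a = x ∧ b = y ∧ c = z) := by
    intro x y z
    constructor
    · intro h
      exact ⟨congrFun h 0, congrFun h 1, congrFun h 2⟩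
    · rintro ⟨rfl, rfl, rfl⟩; rfl
  rw [heq, heq, heq]
  constructor
  · intro h
    have ha0 : 0 ≤ 3*a^2 - 3*a := by
      rcases le_or_gt a 0 with h' | h' <;> nlinarith
    have hb0 : 0 ≤ 3*b^2 - 2*b := by
      rcases le_or_gt b 0 with h' | h' <;> nlinarith
    have hc0 : -1 ≤ 3*c^2 - 4*c := by
      rcases le_or_gt c 0 with h' | h' <;> nlinarith
    have ha1 : 0 ≤ a := by by_contra h'; push_neg at h'; nlinarith
    have ha2 : a ≤ 1 := by by_contra h'; push_neg at h'; nlinarith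
    have hb1 : 0 ≤ b := by by_contra h'; push_neg at h'; nlinarith
    have hb2 : b ≤ 1 := by by_contra h'; push_neg at h'; nlinarith
    have hc1 : 0 ≤ c := by by_contra h'; push_neg at h'; nlinarith
    have hc2 : c ≤ 1 := by by_contra h'; push_neg at h'; nlinarith
    interval_cases a <;> interval_cases b <;> interval_cases c <;>
      (revert h hm0; norm_num)
  · rintro (⟨rfl, rfl, rfl⟩ | ⟨rfl, rfl, rfl⟩ | ⟨rfl, rfl, rfl⟩) <;> ring
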